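/- Under the bounds ‖Δ⁰_β‖² ≤ 2 L_{∇g}² L̄_f² Q, ‖Q_β‖² ≤ 2 L̄_f² Q, and with Δ^λ_β = Δ⁰_β + λ Q_β, for any α > 0, λ ≥ 0 and any orthogonal projection P, one has −⟨G_β + α Δ^λ_β, P(G_β − Δ⁰_β)⟩ ≤ (L̄_f²/2)((α+1) L_{∇g} + αλ)² Q, for any vector G_β. -/
import Mathlib


open scoped RealInnerProductSpace

set_option maxHeartbeats 1000000

/-- Proposition 4.7 (first claim, vector form): descent rate of the
β-component of the Lyapunov function. -/
theorem stmt_11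
    {n : ℕ} (Gβ Δ0 Qβ : EuclideanSpace ℝ (Fin n))
    (Lg Lf Q α lam : ℝ)
    (hα : 0 < α) (hlam : 0 ≤ lam) (hQ : 0 ≤ Q) (hLg : 0 < Lg) (hLf : 0 < Lf)
    (hΔ0 : ‖Δ0‖ ^ 2 ≤ 2 * Lg ^ 2 * Lf ^ 2 * Q)
    (hQβ : ‖Qβ‖ ^ 2 ≤ 2 * Lf ^ 2 * Q)
    (P : EuclideanSpace ℝ (Fin n) →L[ℝ] EuclideanSpace ℝ (Fin n))
    (hsym : ∀ x y, ⟪P x, y⟫ = ⟪x, P y⟫)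
    (hidem : ∀ x, P (P x) = P x) :
    -⟪Gβ + α • (Δ0 + lam • Qβ), P (Gβ - Δ0)⟫ ≤
      (Lf ^ 2 / 2) * ((α + 1) * Lg + α * lam) ^ 2 * Q := by
  set u := P (Gβ - Δ0) with hu
  set v := (α + 1) • Δ0 + (α * lam) • Qβ with hv
  have hsplit : Gβ + α • (Δ0 + lam • Qβ) = (Gβ - Δ0) + v := by
    rw [hv]; module
  have hself : ⟪Gβ - Δ0, u⟫ = ‖u‖ ^ 2 := by
    rw [hu, ← hidem (Gβ - Δ0), ← hsym, hidem, real_inner_self_eq_norm_sq]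
  have hexp : -⟪Gβ + α • (Δ0 + lam • Qβ), u⟫ = -‖u‖ ^ 2 - ⟪v, u⟫ := by
    rw [hsplit, inner_add_left, hself]; ring
  rw [hexp]
  have hcs : -⟪v, u⟫ ≤ ‖v‖ * ‖u‖ := by
    have := abs_real_inner_le_norm v u
    have h := neg_abs_le (⟪v, u⟫ : ℝ)
    nlinarith [abs_nonneg (⟪v, u⟫ : ℝ)]
  -- bound ‖v‖
  set a := ‖Δ0‖ with ha'
  set b := ‖Qβ‖ with hb'
  have ha0 : 0 ≤ a := norm_nonneg _
  have hb0 : 0 ≤ b := norm_nonneg _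
  have hab : a * b ≤ 2 * Lg * Lf ^ 2 * Q := by
    nlinarith [sq_nonneg (a - Lg * b), mul_pos hLg hLg, hLg.le]
  have hvle : ‖v‖ ≤ (α + 1) * a + (α * lam) * b := by
    calc ‖v‖ ≤ ‖(α + 1) • Δ0‖ + ‖(α * lam) • Qβ‖ := norm_add_le _ _
    _ = (α + 1) * a + (α * lam) * b := by
        rw [norm_smul, norm_smul, Real.norm_eq_abs, Real.norm_eq_abs,
          abs_of_pos (by linarith), abs_of_nonneg (mul_nonneg hα.le hlam)]
  have hvsq : ‖v‖ ^ 2 ≤ 2 * Lf ^ 2 * Q * ((α + 1) * Lg + α * lam) ^ 2 := by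
    have h1 : ‖v‖ ^ 2 ≤ ((α + 1) * a + (α * lam) * b) ^ 2 := by
      have := norm_nonneg v
      nlinarith
    have e1 : (α + 1) ^ 2 * a ^ 2 ≤ (α + 1) ^ 2 * (2 * Lg ^ 2 * Lf ^ 2 * Q) :=
      mul_le_mul_of_nonneg_left hΔ0 (sq_nonneg _)
    have e2 : (α * lam) ^ 2 * b ^ 2 ≤ (α * lam) ^ 2 * (2 * Lf ^ 2 * Q) :=
      mul_le_mul_of_nonneg_left hQβ (sq_nonneg _)
    have e3 : (2 * (α + 1) * (α * lam)) * (a * b) ≤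
        (2 * (α + 1) * (α * lam)) * (2 * Lg * Lf ^ 2 * Q) :=
      mul_le_mul_of_nonneg_left hab
        (by positivity)
    calc ‖v‖ ^ 2 ≤ ((α + 1) * a + (α * lam) * b) ^ 2 := h1
    _ = (α + 1) ^ 2 * a ^ 2 + (2 * (α + 1) * (α * lam)) * (a * b)
        + (α * lam) ^ 2 * b ^ 2 := by ring
    _ ≤ (α + 1) ^ 2 * (2 * Lg ^ 2 * Lf ^ 2 * Q)
        + (2 * (α + 1) * (α * lam)) * (2 * Lg * Lf ^ 2 * Q)
        + (α * lam) ^ 2 * (2 * Lf ^ 2 * Q) := by linarith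
    _ = 2 * Lf ^ 2 * Q * ((α + 1) * Lg + α * lam) ^ 2 := by ring
  nlinarith [sq_nonneg (2 * ‖u‖ - ‖v‖), norm_nonneg u, norm_nonneg v]
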